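/- Let k ≥ n ≥ 3 and m ≥ 2n. Then for every i with 1 ≤ i ≤ F_{n,m-n+1}, q(i + F_{n,m}) = q(i) + F_{n,k+m}. -/

import Mathlib

/-- `L` encodes an `n`-decomposition of `x`: indices at least `n`, consecutive
gaps at least `n`, summing (via `F`) to `x`. -/
def IsDecompOf (n : ℕ) (F : ℕ → ℕ) (L : List ℕ) (x : ℕ) : Prop :=
  (∀ c ∈ L, n ≤ c) ∧ L.Chain' (fun a b => a + n ≤ b) ∧ (L.map F).sum = x

/-- `x` is a positive integer whose `n`-decomposition has `F k` as its
smallest summand (i.e. `k` is the smallest index used). -/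
def MemXnk (n k : ℕ) (F : ℕ → ℕ) (x : ℕ) : Prop :=
  0 < x ∧ ∃ L : List ℕ, IsDecompOf n F L x ∧ k ∈ L ∧ ∀ c ∈ L, k ≤ c

section Aux

variable {n k : ℕ} {F : ℕ → ℕ}

lemma F_pos (hn : 3 ≤ n)
    (hF1 : ∀ i, 1 ≤ i → i ≤ n → F i = 1)
    (hFrec : ∀ m, n ≤ m → F (m + 1) = F m + F (m + 1 - n)) :
    ∀ j, 1 ≤ j → 1 ≤ F j := by
  intro j
  induction j using Nat.strong_induction_on with
  | _ j ih =>
    intro hj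
    rcases le_or_gt j n with h | h
    · rw [hF1 j hj h]
    · obtain ⟨m, rfl⟩ : ∃ m, j = m + 1 := ⟨j - 1, by omega⟩
      rw [hFrec m (by omega)]
      have := ih m (by omega) (by omega)
      omega

lemma F_step (hn : 3 ≤ n)
    (hF1 : ∀ i, 1 ≤ i → i ≤ n → F i = 1)
    (hFrec : ∀ m, n ≤ m → F (m + 1) = F m + F (m + 1 - n)) :
    ∀ j, 1 ≤ j → F j ≤ F (j + 1) := by
  intro j hj
  rcases lt_or_ge j n with h | h
  · rw [hF1 j hj (by omega), hF1 (j+1) (by omega) (by omega)]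
  · rw [hFrec j h]; omega

lemma F_mono (hn : 3 ≤ n)
    (hF1 : ∀ i, 1 ≤ i → i ≤ n → F i = 1)
    (hFrec : ∀ m, n ≤ m → F (m + 1) = F m + F (m + 1 - n)) :
    ∀ a b, 1 ≤ a → a ≤ b → F a ≤ F b := by
  intro a b ha hab
  induction b, hab using Nat.le_induction with
  | base => exact le_rfl
  | succ b hb ih => exact ih.trans (F_step hn hF1 hFrec b (by omega))

lemma F_strict (hn : 3 ≤ n)
    (hF1 : ∀ i, 1 ≤ i → i ≤ n → F i = 1)
    (hFrec : ∀ m, n ≤ m → F (m + 1) = F m + F (m + 1 - n)) :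
    ∀ j, n ≤ j → F j < F (j + 1) := by
  intro j hj
  rw [hFrec j hj]
  have := F_pos hn hF1 hFrec (j + 1 - n) (by omega)
  omega

lemma sum_lt (hn : 3 ≤ n)
    (hF1 : ∀ i, 1 ≤ i → i ≤ n → F i = 1)
    (hFrec : ∀ m, n ≤ m → F (m + 1) = F m + F (m + 1 - n)) :
    ∀ L : List ℕ, (∀ c ∈ L, n ≤ c) → L.Pairwise (fun a b => a + n ≤ b) →
      ∀ M, (∀ c ∈ L, c ≤ M) → n ≤ M → (L.map F).sum < F (M + 1) := by
  intro L
  induction L using List.reverseRecOn with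
  | nil =>
    intro _ _ M _ hM
    simpa [Nat.pos_iff_ne_zero, Nat.one_le_iff_ne_zero] using F_pos hn hF1 hFrec (M + 1) (by omega)
  | append_singleton L₀ c ih =>
    intro hge hpw M hle hM
    have hpw' := List.pairwise_append.mp hpw
    have hpw₀ : L₀.Pairwise (fun a b => a + n ≤ b) := hpw'.1
    have hc : ∀ a ∈ L₀, a + n ≤ c := fun a ha => hpw'.2.2 a ha c (by simp)
    have hcM : c ≤ M := hle c (by simp)
    have hcn : n ≤ c := hge c (by simp)
    have hrec : F (M + 1) = F M + F (M + 1 - n) := hFrec M hM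
    have hcle : F c ≤ F M := F_mono hn hF1 hFrec c M (by omega) hcM
    rw [List.map_append, List.sum_append]
    simp only [List.map_cons, List.map_nil, List.sum_cons, List.sum_nil]
    by_cases h0 : L₀ = []
    · subst h0
      have := F_pos hn hF1 hFrec (M + 1 - n) (by omega)
      simp only [List.map_nil, List.sum_nil]
      omega
    · obtain ⟨a, ha⟩ := List.exists_mem_of_ne_nil L₀ h0
      have han : n ≤ a := hge a (List.mem_append_left _ ha)
      have h2n : a + n ≤ c := hc a ha
      have hge' : ∀ x ∈ L₀, n ≤ x := fun x hx => hge x (List.mem_append_left _ hx)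
      have hih : (L₀.map F).sum < F (c - n + 1) :=
        ih hge' hpw₀ (c - n) (fun x hx => by have := hc x hx; omega) (by omega)
      have hmn : F (c - n + 1) ≤ F (M + 1 - n) := by
        have : F (c - n + 1) ≤ F (M - n + 1) :=
          F_mono hn hF1 hFrec (c - n + 1) (M - n + 1) (by omega) (by omega)
        have e : M + 1 - n = M - n + 1 := by omega
        rw [e]; exact this
      omega

lemma gap_trans : IsTrans ℕ (fun a b => a + n ≤ b) := ⟨fun a b c h1 h2 => by omega⟩

lemma decomp_pairwise {L : List ℕ} {x : ℕ} (hd : IsDecompOf n F L x) :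
    L.Pairwise (fun a b => a + n ≤ b) := by
  have := @gap_trans n
  exact (List.isChain_iff_pairwise).mp hd.2.1

lemma le_of_mem_decomp (hn : 3 ≤ n)
    (hF1 : ∀ i, 1 ≤ i → i ≤ n → F i = 1)
    (hFrec : ∀ m, n ≤ m → F (m + 1) = F m + F (m + 1 - n))
    {L : List ℕ} {x c : ℕ} (hd : IsDecompOf n F L x) (hc : c ∈ L) : F c ≤ x := by
  have : F c ∈ L.map F := List.mem_map_of_mem hc
  have h := List.single_le_sum (l := L.map F) (fun y _ => Nat.zero_le y) _ this
  rw [hd.2.2] at h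
  exact h

lemma indices_le (hn : 3 ≤ n)
    (hF1 : ∀ i, 1 ≤ i → i ≤ n → F i = 1)
    (hFrec : ∀ m, n ≤ m → F (m + 1) = F m + F (m + 1 - n))
    {L : List ℕ} {x M : ℕ} (hd : IsDecompOf n F L x) (hx : x < F (M + 1)) :
    ∀ c ∈ L, c ≤ M := by
  intro c hc
  by_contra h
  have h1 : F (M + 1) ≤ F c := F_mono hn hF1 hFrec (M + 1) c (by omega) (by omega)
  have h2 : F c ≤ x := le_of_mem_decomp hn hF1 hFrec hd hc
  omega

lemma shift_mem (hn : 3 ≤ n) (hk : n ≤ k)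
    (hF1 : ∀ i, 1 ≤ i → i ≤ n → F i = 1)
    (hFrec : ∀ m, n ≤ m → F (m + 1) = F m + F (m + 1 - n))
    {x t : ℕ} (ht : n ≤ t)
    (hx : MemXnk n k F x) (hlt : x < F (k + t - n + 1)) :
    MemXnk n k F (x + F (k + t)) := by
  obtain ⟨hpos, L, hd, hkL, hmin⟩ := hx
  have hle : ∀ c ∈ L, c ≤ k + t - n := indices_le hn hF1 hFrec hd (by
    have e : k + t - n + 1 = (k + t - n) + 1 := rfl
    rw [← e]; exact hlt)
  have hpw : L.Pairwise (fun a b => a + n ≤ b) := decomp_pairwise hd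
  refine ⟨by omega, L ++ [k + t], ⟨?_, ?_, ?_⟩, ?_, ?_⟩
  · intro c hc
    rcases List.mem_append.mp hc with h | h
    · exact hd.1 c h
    · simp at h; omega
  · refine List.Pairwise.isChain ?_
    rw [List.pairwise_append]
    refine ⟨hpw, List.pairwise_singleton _ _, ?_⟩
    intro a ha b hb
    simp at hb
    have := hle a ha
    omega
  · rw [List.map_append, List.sum_append, hd.2.2]
    simp
  · exact List.mem_append_left _ hkL
  · intro c hc
    rcases List.mem_append.mp hc with h | h
    · exact hmin c h
    · simp at h; omega

lemma unshift (hn : 3 ≤ n) (hk : n ≤ k)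
    (hF1 : ∀ i, 1 ≤ i → i ≤ n → F i = 1)
    (hFrec : ∀ m, n ≤ m → F (m + 1) = F m + F (m + 1 - n))
    {y t : ℕ} (ht : n ≤ t)
    (hy : MemXnk n k F y) (h1 : F (k + t) ≤ y) (h2 : y < F (k + t + 1)) :
    ∃ x, MemXnk n k F x ∧ x < F (k + t - n + 1) ∧ y = x + F (k + t) := by
  obtain ⟨hpos, L, hd, hkL, hmin⟩ := hy
  have hle : ∀ c ∈ L, c ≤ k + t := indices_le hn hF1 hFrec hd h2
  have hpw : L.Pairwise (fun a b => a + n ≤ b) := decomp_pairwise hd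
  have hge : ∀ c ∈ L, n ≤ c := hd.1
  -- k + t ∈ L
  have hmem : (k + t) ∈ L := by
    by_contra h
    have hle' : ∀ c ∈ L, c ≤ k + t - 1 := by
      intro c hc
      have := hle c hc
      rcases eq_or_lt_of_le this with h' | h'
      · exact absurd (h' ▸ hc) h
      · omega
    have := sum_lt hn hF1 hFrec L hge hpw (k + t - 1) hle' (by omega)
    have e : k + t - 1 + 1 = k + t := by omega
    rw [e, hd.2.2] at this
    omega
  obtain ⟨A, B, rfl⟩ := List.append_of_mem hmem
  -- B = []
  have hB : B = [] := by
    rw [List.eq_nil_iff_forall_not_mem]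
    intro b hb
    have h1' : (k + t) + n ≤ b := by
      have := (List.pairwise_append.mp hpw).2.1
      exact (List.pairwise_cons.mp this).1 b hb
    have h2' : b ≤ k + t := hle b (by simp [hb])
    omega
  subst hB
  have hApw : A.Pairwise (fun a b => a + n ≤ b) := (List.pairwise_append.mp hpw).1
  have hAub : ∀ a ∈ A, a + n ≤ k + t := by
    intro a ha
    exact (List.pairwise_append.mp hpw).2.2 a ha (k + t) (by simp)
  have hAge : ∀ a ∈ A, n ≤ a := fun a ha => hge a (List.mem_append_left _ ha)
  have hsum : y = (A.map F).sum + F (k + t) := by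
    have := hd.2.2
    rw [List.map_append, List.sum_append] at this
    simp at this
    omega
  have hkA : k ∈ A := by
    rcases List.mem_append.mp hkL with h | h
    · exact h
    · simp at h; omega
  have hAlt : (A.map F).sum < F (k + t - n + 1) := by
    have := sum_lt hn hF1 hFrec A hAge hApw (k + t - n)
      (fun a ha => by have := hAub a ha; omega) (by omega)
    have e : k + t - n + 1 = (k + t - n) + 1 := rfl
    rw [e]; exact this
  refine ⟨(A.map F).sum, ⟨?_, A, ⟨hAge, hApw.isChain, rfl⟩, hkA, ?_⟩, hAlt, hsum⟩
  · have hFk : 1 ≤ F k := F_pos hn hF1 hFrec k (by omega)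
    have := le_of_mem_decomp hn hF1 hFrec (⟨hAge, hApw.isChain, rfl⟩ : IsDecompOf n F A (A.map F).sum) hkA
    omega
  · intro c hc
    exact hmin c (List.mem_append_left _ hc)


open Classical in
noncomputable def Sset (n k : ℕ) (F : ℕ → ℕ) (t : ℕ) : Finset ℕ :=
  (Finset.range (F (k + t + 1))).filter (fun x => MemXnk n k F x)

lemma mem_Sset {t x : ℕ} :
    x ∈ Sset n k F t ↔ MemXnk n k F x ∧ x < F (k + t + 1) := by
  simp [Sset, Finset.mem_filter, Finset.mem_range, and_comm]

lemma Fk_lt (hn : 3 ≤ n) (hk : n ≤ k)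
    (hF1 : ∀ i, 1 ≤ i → i ≤ n → F i = 1)
    (hFrec : ∀ m, n ≤ m → F (m + 1) = F m + F (m + 1 - n)) :
    ∀ t, F k < F (k + t + 1) := by
  intro t
  have h1 : F k < F (k + 1) := F_strict hn hF1 hFrec k hk
  have h2 : F (k + 1) ≤ F (k + t + 1) := F_mono hn hF1 hFrec _ _ (by omega) (by omega)
  omega

lemma Fk_memXnk (hn : 3 ≤ n) (hk : n ≤ k)
    (hF1 : ∀ i, 1 ≤ i → i ≤ n → F i = 1)
    (hFrec : ∀ m, n ≤ m → F (m + 1) = F m + F (m + 1 - n)) :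
    MemXnk n k F (F k) := by
  refine ⟨F_pos hn hF1 hFrec k (by omega), [k], ⟨?_, ?_, by simp⟩, by simp, by simp⟩
  · simp; omega
  · exact List.isChain_singleton _

lemma card_Sset (hn : 3 ≤ n) (hk : n ≤ k)
    (hF1 : ∀ i, 1 ≤ i → i ≤ n → F i = 1)
    (hFrec : ∀ m, n ≤ m → F (m + 1) = F m + F (m + 1 - n)) :
    ∀ t, (Sset n k F t).card = F (t + 1) := by
  intro t
  induction t using Nat.strong_induction_on with
  | _ t ih =>
    rcases lt_or_ge t n with ht | ht
    · -- base case : Sset = {F k}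
      have : Sset n k F t = {F k} := by
        ext x
        rw [mem_Sset, Finset.mem_singleton]
        constructor
        · rintro ⟨⟨hpos, L, hd, hkL, hmin⟩, hlt⟩
          have hle : ∀ c ∈ L, c ≤ k + t := indices_le hn hF1 hFrec hd hlt
          match L, hd, hkL, hmin, hle with
          | [c], hd, hkL, hmin, hle =>
            simp at hkL
            subst hkL
            have := hd.2.2
            simp at this
            omega
          | a :: b :: rest, hd, hkL, hmin, hle =>
            have hab : a + n ≤ b := (List.isChain_cons_cons.mp hd.2.1).1
            have ha : k ≤ a := hmin a (by simp)
            have hb : b ≤ k + t := hle b (by simp)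
            omega
        · rintro rfl
          exact ⟨Fk_memXnk hn hk hF1 hFrec, Fk_lt hn hk hF1 hFrec t⟩
      rw [this, Finset.card_singleton, hF1 (t + 1) (by omega) (by omega)]
    · -- recursive case
      have e1 : k + (t - 1) + 1 = k + t := by omega
      have e2 : k + (t - n) + 1 = k + t - n + 1 := by omega
      have hsplit : Sset n k F t
          = Sset n k F (t - 1) ∪ (Sset n k F (t - n)).image (· + F (k + t)) := by
        ext x
        simp only [Finset.mem_union, Finset.mem_image, mem_Sset]
        constructor
        · rintro ⟨hx, hlt⟩
          by_cases hcase : x < F (k + t)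
          · left; exact ⟨hx, by rw [e1]; exact hcase⟩
          · right
            obtain ⟨x', hx', hlt', rfl⟩ :=
              unshift hn hk hF1 hFrec ht hx (by omega) hlt
            exact ⟨x', ⟨hx', by rw [e2]; exact hlt'⟩, rfl⟩
        · rintro (⟨hx, hlt⟩ | ⟨x', ⟨hx', hlt'⟩, rfl⟩)
          · rw [e1] at hlt
            have : F (k + t) ≤ F (k + t + 1) :=
              F_step hn hF1 hFrec (k + t) (by omega)
            exact ⟨hx, by omega⟩
          · rw [e2] at hlt'
            refine ⟨shift_mem hn hk hF1 hFrec ht hx' hlt', ?_⟩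
            have hr : F (k + t + 1) = F (k + t) + F (k + t + 1 - n) :=
              hFrec (k + t) (by omega)
            have e3 : k + t + 1 - n = k + t - n + 1 := by omega
            rw [hr, e3]
            omega
      have hdisj : Disjoint (Sset n k F (t - 1))
          ((Sset n k F (t - n)).image (· + F (k + t))) := by
        rw [Finset.disjoint_left]
        intro x hx hx'
        rw [mem_Sset, e1] at hx
        obtain ⟨x', _, rfl⟩ := Finset.mem_image.mp hx'
        omega
      rw [hsplit, Finset.card_union_of_disjoint hdisj,
        Finset.card_image_of_injOn (fun a _ b _ h => by simpa using h),
        ih (t - 1) (by omega), ih (t - n) (by omega)]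
      have hr : F (t + 1) = F t + F (t + 1 - n) := hFrec t ht
      have e4 : t - 1 + 1 = t := by omega
      have e5 : t - n + 1 = t + 1 - n := by omega
      rw [e4, e5, hr]

lemma initial_seg (J : Finset ℕ) (h1 : ∀ r ∈ J, 1 ≤ r)
    (h2 : ∀ r ∈ J, ∀ s, 1 ≤ s → s ≤ r → s ∈ J) : J = Finset.Icc 1 J.card := by
  rcases J.eq_empty_or_nonempty with rfl | hne
  · simp
  · have hJ : J = Finset.Icc 1 (J.max' hne) := by
      ext s
      rw [Finset.mem_Icc]
      constructor
      · intro hs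
        exact ⟨h1 s hs, J.le_max' s hs⟩
      · rintro ⟨hs1, hs2⟩
        exact h2 _ (J.max'_mem hne) s hs1 hs2
    rw [hJ]
    congr 1
    rw [Nat.card_Icc]
    omega

section Enum

variable {q : ℕ → ℕ}

lemma q_mono' (hq_mono : ∀ r, 1 ≤ r → q r < q (r + 1)) :
    ∀ a b, 1 ≤ a → a < b → q a < q b := by
  intro a b ha hab
  induction b, hab using Nat.le_induction with
  | base => exact hq_mono a ha
  | succ b hb ih => exact ih.trans (hq_mono b (by omega))

lemma q_mono_le (hq_mono : ∀ r, 1 ≤ r → q r < q (r + 1)) :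
    ∀ a b, 1 ≤ a → a ≤ b → q a ≤ q b := by
  intro a b ha hab
  rcases eq_or_lt_of_le hab with rfl | h
  · exact le_rfl
  · exact (q_mono' hq_mono a b ha h).le

lemma q_ge (hq_mem : ∀ r, 1 ≤ r → MemXnk n k F (q r))
    (hq_mono : ∀ r, 1 ≤ r → q r < q (r + 1)) :
    ∀ r, 1 ≤ r → r ≤ q r := by
  intro r
  induction r with
  | zero => omega
  | succ r ih =>
    intro _
    rcases Nat.eq_zero_or_pos r with rfl | hr
    · exact (hq_mem 1 le_rfl).1
    · have := hq_mono r hr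
      have := ih hr
      omega

lemma q_mem_Sset_iff (hn : 3 ≤ n) (hk : n ≤ k)
    (hF1 : ∀ i, 1 ≤ i → i ≤ n → F i = 1)
    (hFrec : ∀ m, n ≤ m → F (m + 1) = F m + F (m + 1 - n))
    (hq_mem : ∀ r, 1 ≤ r → MemXnk n k F (q r))
    (hq_mono : ∀ r, 1 ≤ r → q r < q (r + 1))
    (hq_surj : ∀ x, MemXnk n k F x → ∃ r, 1 ≤ r ∧ q r = x) :
    ∀ t r, 1 ≤ r → (q r ∈ Sset n k F t ↔ r ≤ F (t + 1)) := by
  intro t r hr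
  classical
  set M := F (k + t + 1) with hM
  set I : Finset ℕ := (Finset.Icc 1 M).filter (fun s => q s ∈ Sset n k F t) with hI
  have hmemI : ∀ s, s ∈ I ↔ (1 ≤ s ∧ s ≤ M ∧ q s ∈ Sset n k F t) := by
    intro s
    simp [hI, Finset.mem_filter, Finset.mem_Icc, and_assoc]
  have himg : Sset n k F t = I.image q := by
    ext x
    constructor
    · intro hx
      obtain ⟨s, hs1, rfl⟩ := hq_surj x (mem_Sset.mp hx).1
      have hxlt : q s < M := by
        have := (mem_Sset.mp hx).2
        omega
      have hsM : s ≤ M := le_trans (q_ge hq_mem hq_mono s hs1) hxlt.le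
      exact Finset.mem_image.mpr ⟨s, (hmemI s).mpr ⟨hs1, hsM, hx⟩, rfl⟩
    · intro hx
      obtain ⟨s, hs, rfl⟩ := Finset.mem_image.mp hx
      exact ((hmemI s).mp hs).2.2
  have hcardI : I.card = F (t + 1) := by
    have hinj : Set.InjOn q ↑I := by
      intro a ha b hb hab
      have ha1 : 1 ≤ a := ((hmemI a).mp ha).1
      have hb1 : 1 ≤ b := ((hmemI b).mp hb).1
      by_contra hne
      rcases lt_or_gt_of_ne hne with h | h
      · exact absurd hab (q_mono' hq_mono a b ha1 h).ne
      · exact absurd hab.symm (q_mono' hq_mono b a hb1 h).ne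
    have := Finset.card_image_of_injOn hinj
    rw [← himg, card_Sset hn hk hF1 hFrec t] at this
    omega
  have hIcc : I = Finset.Icc 1 (F (t + 1)) := by
    rw [← hcardI]
    apply initial_seg
    · intro s hs; exact ((hmemI s).mp hs).1
    · intro s hs u hu1 hus
      have hs' := (hmemI s).mp hs
      refine (hmemI u).mpr ⟨hu1, le_trans hus hs'.2.1, ?_⟩
      rw [mem_Sset]
      refine ⟨hq_mem u hu1, ?_⟩
      have h1 : q u ≤ q s := q_mono_le hq_mono u s hu1 hus
      have h2 := (mem_Sset.mp hs'.2.2).2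
      omega
  constructor
  · intro h
    have hsM : r ≤ M := le_trans (q_ge hq_mem hq_mono r hr)
      (by have := (mem_Sset.mp h).2; omega)
    have : r ∈ I := (hmemI r).mpr ⟨hr, hsM, h⟩
    rw [hIcc, Finset.mem_Icc] at this
    omega
  · intro h
    have : r ∈ I := by rw [hIcc, Finset.mem_Icc]; omega
    exact ((hmemI r).mp this).2.2

end Enum

lemma enum_unique (P : ℕ → Prop) (c : ℕ) (f g : ℕ → ℕ)
    (hfm : ∀ i j, 1 ≤ i → i < j → j ≤ c → f i < f j)
    (hgm : ∀ i j, 1 ≤ i → i < j → j ≤ c → g i < g j)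
    (hfP : ∀ i, 1 ≤ i → i ≤ c → P (f i))
    (hgP : ∀ i, 1 ≤ i → i ≤ c → P (g i))
    (hfs : ∀ y, P y → ∃ i, 1 ≤ i ∧ i ≤ c ∧ f i = y)
    (hgs : ∀ y, P y → ∃ i, 1 ≤ i ∧ i ≤ c ∧ g i = y) :
    ∀ i, 1 ≤ i → i ≤ c → f i = g i := by
  intro i
  induction i using Nat.strong_induction_on with
  | _ i ih =>
    intro hi1 hic
    obtain ⟨j, hj1, hjc, hj⟩ := hfs (g i) (hgP i hi1 hic)
    obtain ⟨j', hj'1, hj'c, hj'⟩ := hgs (f i) (hfP i hi1 hic)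
    rcases lt_trichotomy j i with h | rfl | h
    · have : f j = g j := ih j h hj1 (by omega)
      have : g j < g i := hgm j i hj1 h hic
      omega
    · omega
    · rcases lt_trichotomy j' i with h' | rfl | h'
      · have : f j' = g j' := ih j' h' hj'1 (by omega)
        have : f j' < f i := hfm j' i hj'1 h' hic
        omega
      · omega
      · have h1 : f i < f j := hfm i j hi1 h hjc
        have h2 : g i < g j' := hgm i j' hi1 h' hj'c
        omega

end Aux

/-- Let `k ≥ n ≥ 3` and `m ≥ 2n`, and let `q 1 < q 2 < ⋯` enumerate the
positive integers whose `n`-decomposition has `F k` as smallest summand.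
Then for every `1 ≤ i ≤ F (m-n+1)`, `q (i + F m) = q i + F (k+m)`. -/
theorem q_shift (n k : ℕ) (hn : 3 ≤ n) (hk : n ≤ k)
    (F : ℕ → ℕ)
    (hF1 : ∀ i, 1 ≤ i → i ≤ n → F i = 1)
    (hFrec : ∀ m, n ≤ m → F (m + 1) = F m + F (m + 1 - n))
    (q : ℕ → ℕ)
    (hq_mem : ∀ r, 1 ≤ r → MemXnk n k F (q r))
    (hq_mono : ∀ r, 1 ≤ r → q r < q (r + 1))
    (hq_surj : ∀ x, MemXnk n k F x → ∃ r, 1 ≤ r ∧ q r = x)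
    (m : ℕ) (hm : 2 * n ≤ m) :
    ∀ i, 1 ≤ i → i ≤ F (m - n + 1) → q (i + F m) = q i + F (k + m) := by
  have hmn : n ≤ m := by omega
  have Q := q_mem_Sset_iff hn hk hF1 hFrec hq_mem hq_mono hq_surj
  set c := F (m - n + 1) with hc
  have hFm : 1 ≤ F m := F_pos hn hF1 hFrec m (by omega)
  have hrecm : F (m + 1) = F m + c := by
    rw [hFrec m hmn]
    congr 1
    congr 1
    omega
  have e1 : (m - 1) + 1 = m := by omega
  have e2 : k + (m - 1) + 1 = k + m := by omega
  have e3 : (m - n) + 1 = m - n + 1 := rfl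
  have e4 : k + (m - n) + 1 = k + m - n + 1 := by omega
  have hreckm : F (k + m + 1) = F (k + m) + F (k + m - n + 1) := by
    rw [hFrec (k + m) (by omega)]
    congr 1
    congr 1
    omega
  set P : ℕ → Prop :=
    fun y => MemXnk n k F y ∧ F (k + m) ≤ y ∧ y < F (k + m + 1) with hP
  set f : ℕ → ℕ := fun i => q (i + F m) with hf
  set g : ℕ → ℕ := fun i => q i + F (k + m) with hg
  have hfm : ∀ i j, 1 ≤ i → i < j → j ≤ c → f i < f j := by
    intro i j hi hij _
    exact q_mono' hq_mono (i + F m) (j + F m) (by omega) (by omega)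
  have hgm : ∀ i j, 1 ≤ i → i < j → j ≤ c → g i < g j := by
    intro i j hi hij _
    have := q_mono' hq_mono i j hi hij
    simp only [hg]
    omega
  have hfP : ∀ i, 1 ≤ i → i ≤ c → P (f i) := by
    intro i hi1 hi2
    have hr1 : 1 ≤ i + F m := by omega
    have hmem := hq_mem (i + F m) hr1
    have hub : q (i + F m) < F (k + m + 1) := by
      have h := (Q m (i + F m) hr1).mpr (by omega)
      exact (mem_Sset.mp h).2
    have hlb : F (k + m) ≤ q (i + F m) := by
      have h : ¬ (q (i + F m) ∈ Sset n k F (m - 1)) := by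
        intro hmem'
        have := (Q (m - 1) (i + F m) hr1).mp hmem'
        rw [e1] at this
        omega
      rw [mem_Sset, e2] at h
      push_neg at h
      exact h hmem
    exact ⟨hmem, hlb, hub⟩
  have hgP : ∀ i, 1 ≤ i → i ≤ c → P (g i) := by
    intro i hi1 hi2
    have hqi : q i < F (k + m - n + 1) := by
      have h := (Q (m - n) i hi1).mpr (by rw [e3]; omega)
      have := (mem_Sset.mp h).2
      rw [e4] at this
      exact this
    have hmem := shift_mem hn hk hF1 hFrec hmn (hq_mem i hi1) hqi
    refine ⟨hmem, by simp only [hg]; omega, ?_⟩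
    rw [hreckm]
    simp only [hg]
    omega
  have hfs : ∀ y, P y → ∃ i, 1 ≤ i ∧ i ≤ c ∧ f i = y := by
    rintro y ⟨hy, hy1, hy2⟩
    obtain ⟨r, hr1, rfl⟩ := hq_surj y hy
    have hub : r ≤ F (m + 1) :=
      (Q m r hr1).mp (mem_Sset.mpr ⟨hy, hy2⟩)
    have hlb : F m < r := by
      by_contra h
      have h' : q r ∈ Sset n k F (m - 1) :=
        (Q (m - 1) r hr1).mpr (by rw [e1]; omega)
      have := (mem_Sset.mp h').2
      rw [e2] at this
      omega
    refine ⟨r - F m, by omega, by omega, ?_⟩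
    simp only [hf]
    congr 1
    omega
  have hgs : ∀ y, P y → ∃ i, 1 ≤ i ∧ i ≤ c ∧ g i = y := by
    rintro y ⟨hy, hy1, hy2⟩
    obtain ⟨x, hx, hxlt, rfl⟩ := unshift hn hk hF1 hFrec hmn hy hy1 hy2
    obtain ⟨s, hs1, rfl⟩ := hq_surj x hx
    have hsle : s ≤ c := by
      have h : q s ∈ Sset n k F (m - n) :=
        mem_Sset.mpr ⟨hx, by rw [e4]; exact hxlt⟩
      have := (Q (m - n) s hs1).mp h
      rw [e3] at this
      omega
    exact ⟨s, hs1, hsle, rfl⟩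
  exact enum_unique P c f g hfm hgm hfP hgP hfs hgs
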